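/- arXiv:1308.4292 — 5 statements merged into one kernel-verified Lean document; each statement's English description precedes it below -/
import Mathlib

section
/- Let A be a real k×m matrix and B a real l×n matrix, and suppose there are vectors u ∈ ℝᵐ and v ∈ ℝⁿ such that the kernel of the map x ↦ A x is exactly the span of u and the kernel of the map y ↦ B y is exactly the span of v. Then an m×n real matrix Φ satisfies Aᵀ A Φ + Φ Bᵀ B = 0 if and only if Φ = c · u vᵀ for some real scalar c. In other words, the null space of the Sylvester operator S(Φ) = Aᵀ A Φ + Φ Bᵀ B is spanned by the rank-one matrix u vᵀ. -/
open Matrix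

lemma mul_vecMulVec' {k m n : ℕ} (M : Matrix (Fin k) (Fin m) ℝ) (u : Fin m → ℝ) (v : Fin n → ℝ) :
    M * vecMulVec u v = vecMulVec (M *ᵥ u) v := by
  ext i j
  simp [vecMulVec_apply, mul_apply, mulVec, dotProduct, Finset.sum_mul, mul_assoc]

lemma vecMulVec_mul' {m n p : ℕ} (u : Fin m → ℝ) (v : Fin n → ℝ) (M : Matrix (Fin n) (Fin p) ℝ) :
    vecMulVec u v * M = vecMulVec u (Mᵀ *ᵥ v) := by
  ext i j
  simp only [vecMulVec_apply, mul_apply, mulVec, dotProduct, Finset.mul_sum, transpose_apply]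
  exact Finset.sum_congr rfl fun x _ => by ring

lemma trace_sq {p q : ℕ} (X : Matrix (Fin p) (Fin q) ℝ) :
    trace (Xᵀ * X) = ∑ j, ∑ i, X i j ^ 2 := by
  simp [trace, Matrix.diag, mul_apply, sq]

/-- If `ker A = span{u}` and `ker B = span{v}`, then `Φ` satisfies
`Aᵀ A Φ + Φ Bᵀ B = 0` iff `Φ = c · u vᵀ` for some scalar `c`; i.e. the null space of
the Sylvester operator is spanned by the rank-one matrix `u vᵀ`. -/
theorem sylvester_null_space {k l m n : ℕ}
    (A : Matrix (Fin k) (Fin m) ℝ) (B : Matrix (Fin l) (Fin n) ℝ)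
    (u : Fin m → ℝ) (v : Fin n → ℝ)
    (hA : ∀ x : Fin m → ℝ, A *ᵥ x = 0 ↔ ∃ c : ℝ, x = c • u)
    (hB : ∀ y : Fin n → ℝ, B *ᵥ y = 0 ↔ ∃ c : ℝ, y = c • v)
    (Φ : Matrix (Fin m) (Fin n) ℝ) :
    Aᵀ * A * Φ + Φ * (Bᵀ * B) = 0 ↔ ∃ c : ℝ, Φ = c • vecMulVec u v := by
  have hAu : A *ᵥ u = 0 := (hA u).mpr ⟨1, by simp⟩
  have hBv : B *ᵥ v = 0 := (hB v).mpr ⟨1, by simp⟩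
  constructor
  · intro H
    -- trace argument: trace (Φᵀ * (AᵀAΦ + ΦBᵀB)) = ‖AΦ‖² + ‖ΦBᵀ‖²
    have h1 : trace (Φᵀ * (Aᵀ * A * Φ)) = ∑ j, ∑ i, (A * Φ) i j ^ 2 := by
      rw [← trace_sq]
      congr 1
      rw [transpose_mul]
      simp [Matrix.mul_assoc]
    have h2 : trace (Φᵀ * (Φ * (Bᵀ * B))) = ∑ j, ∑ i, (Φ * Bᵀ) i j ^ 2 := by
      rw [← trace_sq, transpose_mul, transpose_transpose,
        show Φᵀ * (Φ * (Bᵀ * B)) = (Φᵀ * (Φ * Bᵀ)) * B by simp [Matrix.mul_assoc],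
        trace_mul_comm]
      congr 1
      simp [Matrix.mul_assoc]
    have key : (∑ j, ∑ i, (A * Φ) i j ^ 2) + (∑ j, ∑ i, (Φ * Bᵀ) i j ^ 2) = 0 := by
      have := congrArg (fun M => trace (Φᵀ * M)) H
      simpa [Matrix.mul_add, trace_add, h1, h2] using this
    have n1 : (0:ℝ) ≤ ∑ j, ∑ i, (A * Φ) i j ^ 2 := by positivity
    have n2 : (0:ℝ) ≤ ∑ j, ∑ i, (Φ * Bᵀ) i j ^ 2 := by positivity
    have z1 : ∀ i j, (A * Φ) i j = 0 := by
      intro i j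
      have hs : (∑ j, ∑ i, (A * Φ) i j ^ 2) = 0 := le_antisymm (by linarith) n1
      have := (Finset.sum_eq_zero_iff_of_nonneg (fun j _ => by positivity)).mp hs j
        (Finset.mem_univ j)
      have := (Finset.sum_eq_zero_iff_of_nonneg
        (fun i _ => sq_nonneg _)).mp (this) i (Finset.mem_univ i)
      exact pow_eq_zero_iff (by norm_num) |>.mp this
    have z2 : ∀ i j, (Φ * Bᵀ) i j = 0 := by
      intro i j
      have hs : (∑ j, ∑ i, (Φ * Bᵀ) i j ^ 2) = 0 := le_antisymm (by linarith) n2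
      have := (Finset.sum_eq_zero_iff_of_nonneg (fun j _ => by positivity)).mp hs j
        (Finset.mem_univ j)
      have := (Finset.sum_eq_zero_iff_of_nonneg
        (fun i _ => sq_nonneg _)).mp (this) i (Finset.mem_univ i)
      exact pow_eq_zero_iff (by norm_num) |>.mp this
    -- columns of Φ lie in ker A, rows in ker B
    have hcol : ∀ j, ∃ c : ℝ, (fun i => Φ i j) = c • u := by
      intro j
      refine (hA _).mp ?_
      funext i0
      simpa [mulVec, dotProduct, mul_apply] using z1 i0 j
    have hrow : ∀ i, ∃ d : ℝ, Φ i = d • v := by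
      intro i
      refine (hB _).mp ?_
      funext j0
      have := z2 i j0
      simp only [mul_apply, transpose_apply] at this
      simpa [mulVec, dotProduct, mul_comm] using this
    choose c hc using hcol
    choose d hd using hrow
    have ec : ∀ i j, Φ i j = c j * u i := fun i j => by
      have := congrFun (hc j) i; simpa using this
    have ed : ∀ i j, Φ i j = d i * v j := fun i j => by
      have := congrFun (hd i) j; simpa using this
    by_cases hu : ∀ i, u i = 0
    · refine ⟨0, ?_⟩
      ext i j
      simp [ec i j, hu i]
    · push_neg at hu
      obtain ⟨i0, hi0⟩ := hu
      refine ⟨d i0 / u i0, ?_⟩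
      ext i j
      have hcj : c j * u i0 = d i0 * v j := (ec i0 j).symm.trans (ed i0 j)
      simp only [Matrix.smul_apply, vecMulVec_apply, smul_eq_mul]
      rw [ec i j]
      field_simp
      linear_combination u i * hcj
  · rintro ⟨c, rfl⟩
    rw [Matrix.mul_smul, Matrix.smul_mul, Matrix.mul_assoc, mul_vecMulVec', hAu,
      vecMulVec_mul', transpose_mul, transpose_transpose, ← mulVec_mulVec, hBv]
    have e1 : vecMulVec (0 : Fin k → ℝ) v = 0 := by ext i j; simp [vecMulVec_apply]
    have e2 : vecMulVec u (Bᵀ *ᵥ (0 : Fin l → ℝ)) = 0 := by ext i j; simp [vecMulVec_apply]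
    simp only [e1, e2]
    simp
end

section
/- Let D_y be a real k×m matrix and D_x a real l×n matrix such that the kernel of x ↦ D_y x is exactly the span of the all-ones vector 𝟙_m ∈ ℝᵐ and the kernel of x ↦ D_x x is exactly the span of the all-ones vector 𝟙_n ∈ ℝⁿ. Let G_y be k×n and G_x be m×l real matrices, and define ε(Z) = ‖Z D_xᵀ − G_x‖_F² + ‖D_y Z − G_y‖_F². If Z₁ and Z₂ both minimize ε, then Z₁ − Z₂ = c · 𝟙_m 𝟙_nᵀ for some real constant c; that is, the least-squares reconstruction is unique up to an additive constant of integration. -/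
open Matrix

/-- Squared Frobenius norm of a real matrix. -/
noncomputable def frobSq {a b : Type*} [Fintype a] [Fintype b]
    (M : Matrix a b ℝ) : ℝ := ∑ i, ∑ j, (M i j) ^ 2

lemma frobSq_nonneg {a b : Type*} [Fintype a] [Fintype b] (M : Matrix a b ℝ) :
    0 ≤ frobSq M :=
  Finset.sum_nonneg fun _ _ => Finset.sum_nonneg fun _ _ => sq_nonneg _

lemma frobSq_eq_zero {a b : Type*} [Fintype a] [Fintype b] {M : Matrix a b ℝ}
    (h : frobSq M = 0) : M = 0 := by
  ext i j
  have h1 := (Finset.sum_eq_zero_iff_of_nonneg (fun i _ =>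
    Finset.sum_nonneg fun j _ => sq_nonneg (M i j))).1 h i (Finset.mem_univ i)
  have h2 := (Finset.sum_eq_zero_iff_of_nonneg (fun j _ =>
    sq_nonneg (M i j))).1 h1 j (Finset.mem_univ j)
  simpa using sq_eq_zero_iff.1 h2

lemma frobSq_expand {a b : Type*} [Fintype a] [Fintype b]
    (A B : Matrix a b ℝ) (t : ℝ) :
    frobSq (A + t • B) = frobSq A + 2 * t * (∑ i, ∑ j, A i j * B i j)
      + t ^ 2 * frobSq B := by
  simp only [frobSq, Matrix.add_apply, Matrix.smul_apply, smul_eq_mul]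
  have : ∀ i j, (A i j + t * B i j) ^ 2
      = A i j ^ 2 + 2 * t * (A i j * B i j) + t ^ 2 * B i j ^ 2 := by
    intro i j; ring
  simp_rw [this, Finset.sum_add_distrib, Finset.mul_sum]

/-- If the kernels of the derivative operators are exactly the spans of the
all-ones vectors, then any two minimizers of the global least-squares
reconstruction cost differ by an additive constant:
`Z₁ − Z₂ = c · 𝟙_m 𝟙_nᵀ`. -/
theorem gls_minimizers_unique_up_to_constant {k l m n : ℕ}
    (Dy : Matrix (Fin k) (Fin m) ℝ) (Dx : Matrix (Fin l) (Fin n) ℝ)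
    (hDy : ∀ x : Fin m → ℝ, Dy *ᵥ x = 0 ↔ ∃ c : ℝ, x = c • (fun _ => (1 : ℝ)))
    (hDx : ∀ x : Fin n → ℝ, Dx *ᵥ x = 0 ↔ ∃ c : ℝ, x = c • (fun _ => (1 : ℝ)))
    (Gy : Matrix (Fin k) (Fin n) ℝ) (Gx : Matrix (Fin m) (Fin l) ℝ)
    (ε : Matrix (Fin m) (Fin n) ℝ → ℝ)
    (hε : ∀ Z, ε Z = frobSq (Z * Dxᵀ - Gx) + frobSq (Dy * Z - Gy))
    (Z₁ Z₂ : Matrix (Fin m) (Fin n) ℝ)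
    (h₁ : ∀ W, ε Z₁ ≤ ε W) (h₂ : ∀ W, ε Z₂ ≤ ε W) :
    ∃ c : ℝ, Z₁ - Z₂ = c • vecMulVec (fun _ => (1 : ℝ)) (fun _ => (1 : ℝ)) := by
  set D : Matrix (Fin m) (Fin n) ℝ := Z₁ - Z₂ with hD
  set a : ℝ := frobSq (D * Dxᵀ) + frobSq (Dy * D) with ha
  set ip : ℝ := (∑ i, ∑ j, (Z₂ * Dxᵀ - Gx) i j * (D * Dxᵀ) i j)
    + (∑ i, ∑ j, (Dy * Z₂ - Gy) i j * (Dy * D) i j) with hip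
  have hεt : ∀ t : ℝ, ε (Z₂ + t • D) = ε Z₂ + 2 * t * ip + t ^ 2 * a := by
    intro t
    have e1 : (Z₂ + t • D) * Dxᵀ - Gx = (Z₂ * Dxᵀ - Gx) + t • (D * Dxᵀ) := by
      rw [Matrix.add_mul, Matrix.smul_mul]; abel
    have e2 : Dy * (Z₂ + t • D) - Gy = (Dy * Z₂ - Gy) + t • (Dy * D) := by
      rw [Matrix.mul_add, Matrix.mul_smul]; abel
    rw [hε, hε, e1, e2, frobSq_expand, frobSq_expand]
    ring
  have heq : ε Z₁ = ε Z₂ := le_antisymm (h₁ Z₂) (h₂ Z₁)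
  have hZ1 : Z₂ + (1 : ℝ) • D = Z₁ := by rw [one_smul, hD]; abel
  have h1 : ε Z₂ + 2 * ip + a = ε Z₂ := by
    have := hεt 1
    rw [hZ1, heq] at this
    linarith [this]
  have hipa : 2 * ip = -a := by linarith
  have hhalf := h₂ (Z₂ + (2⁻¹ : ℝ) • D)
  rw [hεt] at hhalf
  have hale : a ≤ 0 := by nlinarith
  have ha0 : a = 0 := le_antisymm hale
    (add_nonneg (frobSq_nonneg _) (frobSq_nonneg _))
  have hx0 : D * Dxᵀ = 0 := frobSq_eq_zero (by
    have := frobSq_nonneg (D * Dxᵀ); have := frobSq_nonneg (Dy * D); linarith)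
  have hy0 : Dy * D = 0 := frobSq_eq_zero (by
    have := frobSq_nonneg (D * Dxᵀ); have := frobSq_nonneg (Dy * D); linarith)
  -- columns of D are constant
  have hcol : ∀ j : Fin n, ∃ c : ℝ, (fun i => D i j) = c • (fun _ => (1 : ℝ)) := by
    intro j
    apply (hDy _).1
    funext i
    have := congrFun (congrFun hy0 i) j
    simpa [Matrix.mulVec, dotProduct, Matrix.mul_apply] using this
  -- rows of D are constant
  have hrow : ∀ i : Fin m, ∃ c : ℝ, (fun j => D i j) = c • (fun _ => (1 : ℝ)) := by
    intro i
    apply (hDx _).1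
    funext j
    have := congrFun (congrFun hx0 i) j
    simpa [Matrix.mulVec, dotProduct, Matrix.mul_apply, mul_comm] using this
  rcases Nat.eq_zero_or_pos m with hm | hm
  · exact ⟨0, by ext i j; exact absurd i.2 (by omega)⟩
  rcases Nat.eq_zero_or_pos n with hn | hn
  · exact ⟨0, by ext i j; exact absurd j.2 (by omega)⟩
  have i0 : Fin m := ⟨0, hm⟩
  have j0 : Fin n := ⟨0, hn⟩
  refine ⟨D i0 j0, ?_⟩
  ext i j
  have hconst : D i j = D i0 j0 := by
    obtain ⟨d, hd⟩ := hrow i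
    obtain ⟨c, hc⟩ := hcol j0
    have e1 : D i j = d := by have := congrFun hd j; simpa using this
    have e2 : D i j0 = d := by have := congrFun hd j0; simpa using this
    have e3 : D i j0 = c := by have := congrFun hc i; simpa using this
    have e4 : D i0 j0 = c := by have := congrFun hc i0; simpa using this
    rw [e1, ← e2, e3, ← e4]
  simp [vecMulVec, hconst]
end

section
/- Let D_y be a real k×m matrix and D_x a real l×n matrix, let B_y be a real m×p matrix with orthonormal columns (B_yᵀ B_y = I_p) and B_x a real n×q matrix with orthonormal columns (B_xᵀ B_x = I_q), and let G_y be k×n and G_x be m×l real matrices. Define the spectral-regularization cost ε(C) = ‖B_y C B_xᵀ D_xᵀ − G_x‖_F² + ‖D_y B_y C B_xᵀ − G_y‖_F² for C a real p×q matrix. Then C minimizes ε if and only if C satisfies the p×q Sylvester equation (B_yᵀ D_yᵀ D_y B_y) C + C (B_xᵀ D_xᵀ D_x B_x) = B_yᵀ (D_yᵀ G_y + G_x D_x) B_x. -/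
open Matrix

lemma frobSq_eq_trace {a b : Type*} [Fintype a] [Fintype b] (M : Matrix a b ℝ) :
    frobSq M = (M * Mᵀ).trace := by
  simp [frobSq, Matrix.trace, Matrix.mul_apply, Matrix.diag, sq]

lemma frobSq_smul {a b : Type*} [Fintype a] [Fintype b] (c : ℝ) (M : Matrix a b ℝ) :
    frobSq (c • M) = c ^ 2 * frobSq M := by
  simp [frobSq, Finset.mul_sum, mul_pow]

lemma frobSq_add {a b : Type*} [Fintype a] [Fintype b] (X Y : Matrix a b ℝ) :
    frobSq (X + Y) = frobSq X + 2 * (X * Yᵀ).trace + frobSq Y := by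
  have hsym : (Y * Xᵀ).trace = (X * Yᵀ).trace := by
    rw [← Matrix.trace_transpose (Y * Xᵀ), transpose_mul, transpose_transpose]
  simp only [frobSq_eq_trace, transpose_add, Matrix.add_mul, Matrix.mul_add, trace_add]
  linarith

/-- Spectral regularization: with orthonormal basis matrices `By`, `Bx`, the
coefficient matrix `C` minimizes
`ε(C) = ‖By C Bxᵀ Dxᵀ − Gx‖_F² + ‖Dy By C Bxᵀ − Gy‖_F²` iff it satisfies the
`p×q` Sylvester equation
`(Byᵀ Dyᵀ Dy By) C + C (Bxᵀ Dxᵀ Dx Bx) = Byᵀ (Dyᵀ Gy + Gx Dx) Bx`. -/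
theorem spectral_minimizer_iff_sylvester {k l m n p q : ℕ}
    (Dy : Matrix (Fin k) (Fin m) ℝ) (Dx : Matrix (Fin l) (Fin n) ℝ)
    (By : Matrix (Fin m) (Fin p) ℝ) (Bx : Matrix (Fin n) (Fin q) ℝ)
    (hBy : Byᵀ * By = 1) (hBx : Bxᵀ * Bx = 1)
    (Gy : Matrix (Fin k) (Fin n) ℝ) (Gx : Matrix (Fin m) (Fin l) ℝ)
    (ε : Matrix (Fin p) (Fin q) ℝ → ℝ)
    (hε : ∀ C, ε C = frobSq (By * C * Bxᵀ * Dxᵀ - Gx) + frobSq (Dy * (By * C * Bxᵀ) - Gy))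
    (C : Matrix (Fin p) (Fin q) ℝ) :
    (∀ C' : Matrix (Fin p) (Fin q) ℝ, ε C ≤ ε C') ↔
      (Byᵀ * Dyᵀ * Dy * By) * C + C * (Bxᵀ * Dxᵀ * Dx * Bx) =
        Byᵀ * (Dyᵀ * Gy + Gx * Dx) * Bx := by
  set A := Byᵀ * Dyᵀ * Dy * By with hA
  set Bm := Bxᵀ * Dxᵀ * Dx * Bx with hBm
  set R := Byᵀ * (Dyᵀ * Gy + Gx * Dx) * Bx with hR
  -- key expansion
  have key : ∀ H : Matrix (Fin p) (Fin q) ℝ,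
      ε (C + H) = ε C + 2 * ((A * C + C * Bm - R) * Hᵀ).trace
        + (frobSq (By * H * Bxᵀ * Dxᵀ) + frobSq (Dy * (By * H * Bxᵀ))) := by
    intro H
    have e1 : By * (C + H) * Bxᵀ * Dxᵀ - Gx
        = (By * C * Bxᵀ * Dxᵀ - Gx) + By * H * Bxᵀ * Dxᵀ := by
      simp only [Matrix.mul_add, Matrix.add_mul]; abel
    have e2 : Dy * (By * (C + H) * Bxᵀ) - Gy
        = (Dy * (By * C * Bxᵀ) - Gy) + Dy * (By * H * Bxᵀ) := by
      simp only [Matrix.mul_add, Matrix.add_mul]; abel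
    have c1 : ((By*C*Bxᵀ*Dxᵀ) * (By*H*Bxᵀ*Dxᵀ)ᵀ).trace = ((C * Bm) * Hᵀ).trace := by
      rw [hBm]
      simp only [transpose_mul, transpose_transpose, Matrix.mul_assoc]
      rw [Matrix.trace_mul_comm]
      simp only [Matrix.mul_assoc]
      rw [hBy, Matrix.mul_one]
    have c2 : (Gx * (By*H*Bxᵀ*Dxᵀ)ᵀ).trace = ((Byᵀ*Gx*Dx*Bx) * Hᵀ).trace := by
      simp only [transpose_mul, transpose_transpose, ← Matrix.mul_assoc]
      rw [Matrix.trace_mul_comm]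
      simp only [← Matrix.mul_assoc]
    have c3 : ((Dy*(By*C*Bxᵀ)) * (Dy*(By*H*Bxᵀ))ᵀ).trace = ((A * C) * Hᵀ).trace := by
      rw [hA]
      simp only [transpose_mul, transpose_transpose, Matrix.mul_assoc]
      rw [show Bxᵀ * (Bx * (Hᵀ * (Byᵀ * Dyᵀ))) = (Bxᵀ * Bx) * (Hᵀ * (Byᵀ * Dyᵀ)) by
        simp [Matrix.mul_assoc], hBx, Matrix.one_mul]
      simp only [← Matrix.mul_assoc]
      rw [Matrix.trace_mul_comm]
      simp only [← Matrix.mul_assoc]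
      rw [Matrix.trace_mul_comm]
      simp only [← Matrix.mul_assoc]
    have c4 : (Gy * (Dy*(By*H*Bxᵀ))ᵀ).trace = ((Byᵀ*Dyᵀ*Gy*Bx) * Hᵀ).trace := by
      simp only [transpose_mul, transpose_transpose, ← Matrix.mul_assoc]
      rw [Matrix.trace_mul_comm]
      simp only [← Matrix.mul_assoc]
      rw [Matrix.trace_mul_comm]
      simp only [← Matrix.mul_assoc]
    have hRsplit : R = Byᵀ*Dyᵀ*Gy*Bx + Byᵀ*Gx*Dx*Bx := by
      rw [hR]; simp only [Matrix.mul_add, Matrix.add_mul, Matrix.mul_assoc]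
    rw [hε, hε, e1, e2, frobSq_add, frobSq_add]
    have cross1 : ((By*C*Bxᵀ*Dxᵀ - Gx) * (By*H*Bxᵀ*Dxᵀ)ᵀ).trace
        = ((C * Bm) * Hᵀ).trace - ((Byᵀ*Gx*Dx*Bx) * Hᵀ).trace := by
      rw [Matrix.sub_mul, trace_sub, c1, c2]
    have cross2 : ((Dy*(By*C*Bxᵀ) - Gy) * (Dy*(By*H*Bxᵀ))ᵀ).trace
        = ((A * C) * Hᵀ).trace - ((Byᵀ*Dyᵀ*Gy*Bx) * Hᵀ).trace := by
      rw [Matrix.sub_mul, trace_sub, c3, c4]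
    rw [cross1, cross2]
    have : ((A * C + C * Bm - R) * Hᵀ).trace
        = ((A*C)*Hᵀ).trace + ((C*Bm)*Hᵀ).trace
          - (((Byᵀ*Dyᵀ*Gy*Bx)*Hᵀ).trace + ((Byᵀ*Gx*Dx*Bx)*Hᵀ).trace) := by
      rw [hRsplit]
      simp only [Matrix.sub_mul, Matrix.add_mul, trace_sub, trace_add]
    rw [this]
    ring
  constructor
  · intro hmin
    set G := A * C + C * Bm - R with hG
    set Q := frobSq (By * G * Bxᵀ * Dxᵀ) + frobSq (Dy * (By * G * Bxᵀ)) with hQ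
    have hQ0 : 0 ≤ Q := add_nonneg (frobSq_nonneg _) (frobSq_nonneg _)
    have hstep : ∀ t : ℝ, 0 ≤ (-2*t) * frobSq G + t^2 * Q := by
      intro t
      have hk := key ((-t) • G)
      have h1 : (G * ((-t) • G)ᵀ).trace = (-t) * frobSq G := by
        rw [transpose_smul, Matrix.mul_smul, trace_smul, frobSq_eq_trace]
        simp
      have h2 : By * ((-t) • G) * Bxᵀ * Dxᵀ = (-t) • (By * G * Bxᵀ * Dxᵀ) := by
        simp [Matrix.mul_smul, Matrix.smul_mul]
      have h3 : Dy * (By * ((-t) • G) * Bxᵀ) = (-t) • (Dy * (By * G * Bxᵀ)) := by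
        simp [Matrix.mul_smul, Matrix.smul_mul]
      rw [h1, h2, h3, frobSq_smul, frobSq_smul] at hk
      have hle := hmin (C + (-t) • G)
      rw [hk] at hle
      nlinarith [hle]
    have hS0 : 0 ≤ frobSq G := frobSq_nonneg G
    have hSzero : frobSq G = 0 := by
      by_contra hne
      have hSpos : 0 < frobSq G := lt_of_le_of_ne hS0 (Ne.symm hne)
      have hQ1 : 0 < Q + 1 := by linarith
      set t := frobSq G / (Q + 1) with ht'
      have ht : 0 < t := div_pos hSpos hQ1
      have h1 : t * Q ≤ frobSq G := by
        rw [ht', div_mul_eq_mul_div, div_le_iff₀ hQ1]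
        nlinarith
      have h := hstep t
      nlinarith [mul_le_mul_of_nonneg_left h1 ht.le, mul_pos ht hSpos]
    have : G = 0 := frobSq_eq_zero hSzero
    rw [hG, sub_eq_zero] at this
    exact this
  · intro heq C'
    have h0 : A * C + C * Bm - R = 0 := sub_eq_zero_of_eq heq
    have hk := key (C' - C)
    rw [add_sub_cancel] at hk
    rw [hk, h0]
    simp only [Matrix.zero_mul, trace_zero, mul_zero, add_zero]
    have := add_nonneg (frobSq_nonneg (By * (C' - C) * Bxᵀ * Dxᵀ))
      (frobSq_nonneg (Dy * (By * (C' - C) * Bxᵀ)))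
    linarith
end

section
/- Let Λ_xy, Λ_yy be symmetric positive definite real m×m matrices and Λ_xx, Λ_yx symmetric positive definite real n×n matrices, let D_y be a real m×m matrix, D_x a real n×n matrix, and G_y, G_x real m×n matrices. Define the weighted (Mahalanobis) cost ε(Z) = trace( Λ_xy⁻¹ (Z D_xᵀ − G_x) Λ_xx⁻¹ (Z D_xᵀ − G_x)ᵀ ) + trace( Λ_yy⁻¹ (D_y Z − G_y) Λ_yx⁻¹ (D_y Z − G_y)ᵀ ) for Z a real m×n matrix. Then Z minimizes ε if and only if Z satisfies D_yᵀ Λ_yy⁻¹ D_y Z Λ_yx⁻¹ + Λ_xy⁻¹ Z D_xᵀ Λ_xx⁻¹ D_x = D_yᵀ Λ_yy⁻¹ G_y Λ_yx⁻¹ + Λ_xy⁻¹ G_x Λ_xx⁻¹ D_x. -/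
open Matrix

section Aux
set_option linter.unusedSectionVars false
variable {k l : Type*} [Fintype k] [Fintype l]

lemma symm_of_psd [DecidableEq k] {A : Matrix k k ℝ} (h : A.PosSemidef) : Aᵀ = A := by
  ext i j; simpa using congrFun (congrFun h.isHermitian.eq i) j

lemma trace_psd_nonneg [DecidableEq k] {P : Matrix k k ℝ} (h : P.PosSemidef) : 0 ≤ trace P := by
  rw [trace]
  refine Finset.sum_nonneg fun i _ => ?_
  exact h.diag_nonneg

lemma trace_mul_psd_nonneg [DecidableEq k] {P Q : Matrix k k ℝ} (hP : P.PosSemidef)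
    (hQ : Q.PosSemidef) : 0 ≤ trace (P * Q) := by
  open scoped MatrixOrder Matrix.Norms.L2Operator in
  obtain ⟨B, rfl⟩ := CStarAlgebra.nonneg_iff_eq_star_mul_self.mp hP.nonneg
  rw [Matrix.mul_assoc, trace_mul_comm]
  exact trace_psd_nonneg (hQ.mul_mul_conjTranspose_same B)

lemma quad_nonneg [DecidableEq k] {A : Matrix k k ℝ} {B : Matrix l l ℝ} (hA : A.PosSemidef)
    (hB : B.PosSemidef) (M : Matrix k l ℝ) : 0 ≤ trace (A * M * B * Mᵀ) := by
  have hMt : Mᵀ = Mᴴ := by ext i j; simp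
  have h1 : A * M * B * Mᵀ = A * (M * B * Mᴴ) := by
    rw [← hMt]; simp only [Matrix.mul_assoc]
  rw [h1]
  exact trace_mul_psd_nonneg hA (hB.mul_mul_conjTranspose_same M)

lemma cross_symm {A : Matrix k k ℝ} {B : Matrix l l ℝ} (hA : Aᵀ = A) (hB : Bᵀ = B)
    (M N : Matrix k l ℝ) : trace (A * M * B * Nᵀ) = trace (A * N * B * Mᵀ) := by
  calc trace (A * M * B * Nᵀ) = trace (Nᵀ * (A * M * B)) := trace_mul_comm _ _
    _ = trace ((Nᵀ * (A * M * B))ᵀ) := (trace_transpose _).symm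
    _ = trace ((A * M * B)ᵀ * N) := by rw [transpose_mul, transpose_transpose]
    _ = trace (N * (A * M * B)ᵀ) := trace_mul_comm _ _
    _ = trace (N * B * Mᵀ * A) := by
        simp only [transpose_mul, transpose_transpose, hA, hB, Matrix.mul_assoc]
    _ = trace (A * (N * B * Mᵀ)) := trace_mul_comm _ _
    _ = trace (A * N * B * Mᵀ) := by simp only [Matrix.mul_assoc]

lemma trace_mul_transpose_nonneg (M : Matrix k l ℝ) : 0 ≤ trace (M * Mᵀ) := by
  rw [trace]
  refine Finset.sum_nonneg fun i _ => ?_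
  simp only [diag_apply, mul_apply, transpose_apply]
  exact Finset.sum_nonneg fun j _ => mul_self_nonneg _

lemma eq_zero_of_trace_mul_transpose {M : Matrix k l ℝ} (h : trace (M * Mᵀ) = 0) : M = 0 := by
  have hsum : ∑ i, ∑ j, (M i j)^2 = 0 := by
    simpa [trace, mul_apply, diag, sq] using h
  ext i j
  have h1 := (Finset.sum_eq_zero_iff_of_nonneg (fun i _ => Finset.sum_nonneg
    (fun j _ => sq_nonneg (M i j)))).mp hsum i (Finset.mem_univ i)
  have h2 := (Finset.sum_eq_zero_iff_of_nonneg (fun j _ => sq_nonneg (M i j))).mp h1 j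
    (Finset.mem_univ j)
  simpa using pow_eq_zero_iff (n := 2) (by norm_num) |>.mp h2

lemma trace_quad_expand {A : Matrix k k ℝ} {B : Matrix l l ℝ} (hA : Aᵀ = A) (hB : Bᵀ = B)
    (R P : Matrix k l ℝ) :
    trace (A * (R + P) * B * (R + P)ᵀ) =
      trace (A * R * B * Rᵀ) + 2 * trace (A * R * B * Pᵀ) + trace (A * P * B * Pᵀ) := by
  simp only [transpose_add, Matrix.mul_add, Matrix.add_mul, trace_add]
  rw [cross_symm hA hB P R]
  ring

end Aux

/-- Weighted (Mahalanobis) least squares: with symmetric positive definite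
covariance matrices, `Z` minimizes
`ε(Z) = trace(Λxy⁻¹ (Z Dxᵀ − Gx) Λxx⁻¹ (Z Dxᵀ − Gx)ᵀ)
       + trace(Λyy⁻¹ (Dy Z − Gy) Λyx⁻¹ (Dy Z − Gy)ᵀ)`
iff `Z` satisfies
`Dyᵀ Λyy⁻¹ Dy Z Λyx⁻¹ + Λxy⁻¹ Z Dxᵀ Λxx⁻¹ Dx
  = Dyᵀ Λyy⁻¹ Gy Λyx⁻¹ + Λxy⁻¹ Gx Λxx⁻¹ Dx`. -/
theorem weighted_minimizer_iff_normal_equations {m n : ℕ}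
    (Λxy Λyy : Matrix (Fin m) (Fin m) ℝ) (Λxx Λyx : Matrix (Fin n) (Fin n) ℝ)
    (hΛxy : Λxy.PosDef) (hΛyy : Λyy.PosDef) (hΛxx : Λxx.PosDef) (hΛyx : Λyx.PosDef)
    (Dy : Matrix (Fin m) (Fin m) ℝ) (Dx : Matrix (Fin n) (Fin n) ℝ)
    (Gy Gx : Matrix (Fin m) (Fin n) ℝ)
    (ε : Matrix (Fin m) (Fin n) ℝ → ℝ)
    (hε : ∀ Z, ε Z = trace (Λxy⁻¹ * (Z * Dxᵀ - Gx) * Λxx⁻¹ * (Z * Dxᵀ - Gx)ᵀ)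
      + trace (Λyy⁻¹ * (Dy * Z - Gy) * Λyx⁻¹ * (Dy * Z - Gy)ᵀ))
    (Z : Matrix (Fin m) (Fin n) ℝ) :
    (∀ W : Matrix (Fin m) (Fin n) ℝ, ε Z ≤ ε W) ↔
      Dyᵀ * Λyy⁻¹ * Dy * Z * Λyx⁻¹ + Λxy⁻¹ * Z * Dxᵀ * Λxx⁻¹ * Dx =
        Dyᵀ * Λyy⁻¹ * Gy * Λyx⁻¹ + Λxy⁻¹ * Gx * Λxx⁻¹ * Dx := by
  have hApsd : (Λxy⁻¹).PosSemidef := hΛxy.inv.posSemidef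
  have hBpsd : (Λxx⁻¹).PosSemidef := hΛxx.inv.posSemidef
  have hCpsd : (Λyy⁻¹).PosSemidef := hΛyy.inv.posSemidef
  have hDpsd : (Λyx⁻¹).PosSemidef := hΛyx.inv.posSemidef
  set A := Λxy⁻¹ with hA'
  set B := Λxx⁻¹ with hB'
  set C := Λyy⁻¹ with hC'
  set D := Λyx⁻¹ with hD'
  have hAs : Aᵀ = A := symm_of_psd hApsd
  have hBs : Bᵀ = B := symm_of_psd hBpsd
  have hCs : Cᵀ = C := symm_of_psd hCpsd
  have hDs : Dᵀ = D := symm_of_psd hDpsd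
  set R := Z * Dxᵀ - Gx with hR
  set S := Dy * Z - Gy with hS
  set G := A * R * B * Dx + Dyᵀ * C * S * D with hG
  have hGdef : Dyᵀ * C * Dy * Z * D + A * Z * Dxᵀ * B * Dx
      - (Dyᵀ * C * Gy * D + A * Gx * B * Dx) = G := by
    rw [hG, hR, hS]
    simp only [Matrix.mul_sub, Matrix.sub_mul, Matrix.mul_assoc]
    abel
  have hcross : ∀ E : Matrix (Fin m) (Fin n) ℝ,
      trace (A * R * B * (E * Dxᵀ)ᵀ) + trace (C * S * D * (Dy * E)ᵀ) = trace (G * Eᵀ) := by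
    intro E
    have e1 : trace (A * R * B * (E * Dxᵀ)ᵀ) = trace ((A * R * B * Dx) * Eᵀ) := by
      simp only [transpose_mul, transpose_transpose, Matrix.mul_assoc]
    have e2 : trace (C * S * D * (Dy * E)ᵀ) = trace ((Dyᵀ * C * S * D) * Eᵀ) := by
      rw [show C * S * D * (Dy * E)ᵀ = (C * S * D * Eᵀ) * Dyᵀ by
            simp only [transpose_mul, Matrix.mul_assoc],
          trace_mul_comm]
      simp only [Matrix.mul_assoc]
    rw [e1, e2, hG, Matrix.add_mul, trace_add]
  have key : ∀ E : Matrix (Fin m) (Fin n) ℝ, ε (Z + E) = ε Z + 2 * trace (G * Eᵀ)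
      + (trace (A * (E * Dxᵀ) * B * (E * Dxᵀ)ᵀ) + trace (C * (Dy * E) * D * (Dy * E)ᵀ)) := by
    intro E
    have h1 : (Z + E) * Dxᵀ - Gx = R + E * Dxᵀ := by rw [hR, Matrix.add_mul]; abel
    have h2 : Dy * (Z + E) - Gy = S + Dy * E := by rw [hS, Matrix.mul_add]; abel
    rw [hε, hε, h1, h2, ← hR, ← hS, trace_quad_expand hAs hBs, trace_quad_expand hCs hDs]
    have := hcross E
    linarith
  constructor
  · intro hmin
    set a := trace (G * Gᵀ) with ha'
    set b := trace (A * (G * Dxᵀ) * B * (G * Dxᵀ)ᵀ) + trace (C * (Dy * G) * D * (Dy * G)ᵀ)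
      with hb'
    have ha : 0 ≤ a := trace_mul_transpose_nonneg G
    have hb : 0 ≤ b := add_nonneg (quad_nonneg hApsd hBpsd _) (quad_nonneg hCpsd hDpsd _)
    have hineq : ∀ t : ℝ, 0 ≤ 2 * (t * a) + t ^ 2 * b := by
      intro t
      have h := hmin (Z + t • G)
      rw [key (t • G)] at h
      have e1 : trace (G * (t • G)ᵀ) = t * a := by
        rw [ha', transpose_smul, Matrix.mul_smul, trace_smul, smul_eq_mul]
      have e2 : trace (A * ((t • G) * Dxᵀ) * B * ((t • G) * Dxᵀ)ᵀ)
          = t ^ 2 * trace (A * (G * Dxᵀ) * B * (G * Dxᵀ)ᵀ) := by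
        simp only [Matrix.smul_mul, Matrix.mul_smul, transpose_smul, trace_smul,
          smul_eq_mul]
        ring
      have e3 : trace (C * (Dy * (t • G)) * D * (Dy * (t • G))ᵀ)
          = t ^ 2 * trace (C * (Dy * G) * D * (Dy * G)ᵀ) := by
        simp only [Matrix.smul_mul, Matrix.mul_smul, transpose_smul, trace_smul,
          smul_eq_mul]
        ring
      rw [e1, e2, e3] at h
      rw [hb']
      linarith
    have hb1 : (0:ℝ) < b + 1 := by linarith
    have ha0 : a = 0 := by
      have h := hineq (-(a / (b + 1)))
      have hd : a / (b + 1) * (b + 1) = a := div_mul_cancel₀ a hb1.ne'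
      nlinarith [sq_nonneg (a / (b + 1)), ha, hb]
    have hG0 : G = 0 := eq_zero_of_trace_mul_transpose ha0
    rw [← sub_eq_zero, hGdef]
    exact hG0
  · intro hne
    have hG0 : G = 0 := by rw [← hGdef, hne, sub_self]
    intro W
    have hW : Z + (W - Z) = W := by abel
    have h := key (W - Z)
    rw [hW, hG0] at h
    simp only [Matrix.zero_mul, trace_zero, mul_zero, add_zero] at h
    have q1 := quad_nonneg hApsd hBpsd ((W - Z) * Dxᵀ)
    have q2 := quad_nonneg hCpsd hDpsd (Dy * (W - Z))
    linarith
end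

section
/- Let u ∈ ℝᵐ and v ∈ ℝⁿ be nonzero vectors with u ≠ −‖u‖₂ e₁ and v ≠ −‖v‖₂ e₁, and let P_a = I_m − 2 ũ ũᵀ/(ũᵀ ũ) and P_b = I_n − 2 ṽ ṽᵀ/(ṽᵀ ṽ) be the Householder reflections with ũ = u + ‖u‖₂ e₁ and ṽ = v + ‖v‖₂ e₁. Then for every real m×n matrix Ψ, uᵀ (P_a Ψ P_bᵀ) v = ‖u‖₂ ‖v‖₂ · Ψ_{11}, where Ψ_{11} is the (1,1) entry of Ψ. In particular, if Ψ_{11} = 0, then the transformed surface Φ = P_a Ψ P_bᵀ satisfies the implicit constraint uᵀ Φ v = 0. -/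
open Matrix

lemma householder_aux {k : ℕ} [NeZero k] (w : Fin k → ℝ) (c : ℝ)
    (hc : c = Real.sqrt (∑ i, w i ^ 2))
    (e : Fin k → ℝ) (he : e = Pi.single (0 : Fin k) (1 : ℝ))
    (hne : w ≠ -(c • e)) (wt : Fin k → ℝ) (hwt : wt = w + c • e)
    (P : Matrix (Fin k) (Fin k) ℝ)
    (hP : P = 1 - (2 / (wt ⬝ᵥ wt)) • vecMulVec wt wt) :
    P *ᵥ w = -(c • e) ∧ Pᵀ = P := by
  have hwt0 : wt ≠ 0 := by
    rw [hwt]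
    intro h
    exact hne (eq_neg_of_add_eq_zero_left h)
  have hd : wt ⬝ᵥ wt ≠ 0 := fun h => hwt0 (dotProduct_self_eq_zero.mp h)
  have hc2 : c ^ 2 = w ⬝ᵥ w := by
    rw [hc, Real.sq_sqrt (by positivity)]
    simp [dotProduct, sq]
  have h1 : wt ⬝ᵥ wt = w ⬝ᵥ w + 2 * c * w 0 + c ^ 2 := by
    simp [hwt, add_dotProduct, dotProduct_add, smul_dotProduct, dotProduct_smul, he,
      dotProduct_single, single_dotProduct]
    ring
  have h2 : wt ⬝ᵥ w = w ⬝ᵥ w + c * w 0 := by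
    simp [hwt, add_dotProduct, smul_dotProduct, he, single_dotProduct]
  have hkey : wt ⬝ᵥ wt = 2 * (wt ⬝ᵥ w) := by
    rw [h1, h2, ← hc2]; ring
  constructor
  · have hmv : vecMulVec wt wt *ᵥ w = (wt ⬝ᵥ w) • wt := by
      ext i
      simp only [vecMulVec, mulVec, dotProduct, Pi.smul_apply, smul_eq_mul, of_apply]
      rw [Finset.sum_mul]
      exact Finset.sum_congr rfl fun x _ => by ring
    rw [hP, sub_mulVec, one_mulVec, smul_mulVec, hmv]
    have hcoef : (2 / (wt ⬝ᵥ wt)) • ((wt ⬝ᵥ w) • wt) = wt := by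
      rw [smul_smul]
      have : 2 / (wt ⬝ᵥ wt) * (wt ⬝ᵥ w) = 1 := by
        rw [hkey, div_mul_eq_mul_div, div_eq_one_iff_eq (by rw [← hkey]; exact hd)]
      rw [this, one_smul]
    rw [hcoef, hwt]
    abel
  · rw [hP]
    ext i j
    simp [vecMulVec, Matrix.one_apply, mul_comm]
    by_cases h : i = j
    · simp [h]
    · simp [h]
      exact fun hji => h hji.symm

/-- For Householder reflections `P_a`, `P_b` built from nonzero vectors `u`, `v`,
one has `uᵀ (P_a Ψ P_bᵀ) v = ‖u‖₂ ‖v‖₂ Ψ₁₁` for every `Ψ`; in particular if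
`Ψ₁₁ = 0` then the transformed surface `Φ = P_a Ψ P_bᵀ` satisfies `uᵀ Φ v = 0`. -/
theorem householder_implicit_constraint {m n : ℕ} [NeZero m] [NeZero n]
    (u : Fin m → ℝ) (hu : u ≠ 0) (v : Fin n → ℝ) (hv : v ≠ 0)
    (nrmu : ℝ) (hnrmu : nrmu = Real.sqrt (∑ i, u i ^ 2))
    (nrmv : ℝ) (hnrmv : nrmv = Real.sqrt (∑ j, v j ^ 2))
    (e₁m : Fin m → ℝ) (he₁m : e₁m = Pi.single (0 : Fin m) (1 : ℝ))
    (e₁n : Fin n → ℝ) (he₁n : e₁n = Pi.single (0 : Fin n) (1 : ℝ))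
    (hneu : u ≠ -(nrmu • e₁m)) (hnev : v ≠ -(nrmv • e₁n))
    (ut : Fin m → ℝ) (hut : ut = u + nrmu • e₁m)
    (vt : Fin n → ℝ) (hvt : vt = v + nrmv • e₁n)
    (Pa : Matrix (Fin m) (Fin m) ℝ)
    (hPa : Pa = 1 - (2 / (ut ⬝ᵥ ut)) • vecMulVec ut ut)
    (Pb : Matrix (Fin n) (Fin n) ℝ)
    (hPb : Pb = 1 - (2 / (vt ⬝ᵥ vt)) • vecMulVec vt vt)
    (Ψ : Matrix (Fin m) (Fin n) ℝ) :
    u ⬝ᵥ ((Pa * Ψ * Pbᵀ) *ᵥ v) = nrmu * nrmv * Ψ 0 0 ∧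
    (Ψ 0 0 = 0 → u ⬝ᵥ ((Pa * Ψ * Pbᵀ) *ᵥ v) = 0) := by
  obtain ⟨hau, hasym⟩ := householder_aux u nrmu hnrmu e₁m he₁m hneu ut hut Pa hPa
  obtain ⟨hbv, hbsym⟩ := householder_aux v nrmv hnrmv e₁n he₁n hnev vt hvt Pb hPb
  have hmain : u ⬝ᵥ ((Pa * Ψ * Pbᵀ) *ᵥ v) = nrmu * nrmv * Ψ 0 0 := by
    rw [← mulVec_mulVec, ← mulVec_mulVec, hbsym, hbv, dotProduct_mulVec,
      ← mulVec_transpose, hasym, hau]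
    simp [he₁m, he₁n, mulVec, dotProduct, Pi.single_apply, Finset.mul_sum]
    ring
  exact ⟨hmain, fun h => by rw [hmain, h, mul_zero]⟩
end
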